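/- Let E = {1,...,a} and let D_1,...,D_a be n×n positive semi-definite Hermitian complex matrices. Define the set function g : 2^E → ℝ by g(S) = log det(I + Σ_{i∈S} D_i). Then g is a rank function, i.e.: (i) g(∅) = 0; (ii) g is monotone: g(S) ≤ g(T) whenever S ⊆ T ⊆ E; and (iii) g is submodular: g(S) + g(T) ≥ g(S ∩ T) + g(S ∪ T) for all S, T ⊆ E. Consequently the polyhedron B(g,E) = {x ∈ ℝ^a : x_i ≥ 0 for all i, and Σ_{i∈S} x_i ≤ g(S) for all S ⊆ E} is a polymatroid. -/

import Mathlib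

open Finset ComplexOrder

/-- The set function `g(S) = log det(I + ∑_{i ∈ S} D_i)` (the determinant of a
positive semidefinite Hermitian matrix is a nonnegative real, so we take the
real part). -/
noncomputable def gFun (a n : ℕ) (D : Fin a → Matrix (Fin n) (Fin n) ℂ)
    (S : Finset (Fin a)) : ℝ :=
  Real.log ((1 + ∑ i ∈ S, D i).det.re)

section AuxLemmas

open Matrix

variable {ι : Type*} [Fintype ι] [DecidableEq ι]

open scoped MatrixOrder in
noncomputable def Matrix.PosSemidef.sqrt {A : Matrix ι ι ℂ} (_ : A.PosSemidef) : Matrix ι ι ℂ :=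
  CFC.sqrt A

open scoped MatrixOrder in
lemma Matrix.PosSemidef.sqrt_mul_self {A : Matrix ι ι ℂ} (hA : A.PosSemidef) :
    hA.sqrt * hA.sqrt = A :=
  CFC.sqrt_mul_sqrt_self A hA.nonneg

open scoped MatrixOrder in
lemma Matrix.PosSemidef.posSemidef_sqrt {A : Matrix ι ι ℂ} (hA : A.PosSemidef) :
    hA.sqrt.PosSemidef :=
  (CFC.sqrt_nonneg A).posSemidef

/-- The determinant of `1 + P` is at least `1` for `P` positive semidefinite. -/
lemma aux_one_le_det_one_add {P : Matrix ι ι ℂ} (hP : P.PosSemidef) :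
    1 ≤ (1 + P).det := by
  have hH := hP.1
  set U : Matrix ι ι ℂ := (hH.eigenvectorUnitary : Matrix ι ι ℂ) with hUdef
  have hU : U * star U = 1 := (Matrix.mem_unitaryGroup_iff).mp hH.eigenvectorUnitary.2
  have hspec := hH.spectral_theorem
  simp only [Unitary.conjStarAlgAut_apply, Unitary.coe_star, ← hUdef] at hspec
  have hfact : 1 + P = U * (1 + diagonal (RCLike.ofReal ∘ hH.eigenvalues)) * star U := by
    rw [Matrix.mul_add, Matrix.add_mul, Matrix.mul_one, hU, ← hspec]
  have hdet : (1 + P).det = ((1 : Matrix ι ι ℂ) + diagonal (RCLike.ofReal ∘ hH.eigenvalues)).det := by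
    rw [hfact, det_mul, det_mul, mul_comm U.det _, mul_assoc, ← det_mul, hU, det_one, mul_one]
  rw [hdet]
  have : (1 : Matrix ι ι ℂ) + diagonal (RCLike.ofReal ∘ hH.eigenvalues)
      = diagonal (fun i => 1 + (hH.eigenvalues i : ℂ)) := by
    rw [← Matrix.diagonal_one, Matrix.diagonal_add]
    rfl
  rw [this, det_diagonal]
  have : ∏ i, (1 + (hH.eigenvalues i : ℂ)) = ((∏ i, (1 + hH.eigenvalues i) : ℝ) : ℂ) := by
    push_cast; rfl
  rw [this]
  have h1 : (1 : ℝ) ≤ ∏ i, (1 + hH.eigenvalues i) := by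
    calc (1 : ℝ) = ∏ _i : ι, (1 : ℝ) := by simp
      _ ≤ ∏ i, (1 + hH.eigenvalues i) :=
        Finset.prod_le_prod (fun i _ => zero_le_one)
          (fun i _ => by linarith [hP.eigenvalues_nonneg i])
  exact_mod_cast h1

/-- Factorization: `det (M + C) = det M * det (1 + √C (M⁻¹ √C))`. -/
lemma aux_det_factor {M C : Matrix ι ι ℂ} (hM : M.PosDef) (hC : C.PosSemidef) :
    (M + C).det = M.det * (1 + hC.sqrt * (M⁻¹ * hC.sqrt)).det := by
  have hMd : IsUnit M.det := hM.det_pos.ne'.isUnit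
  have hS : hC.sqrt * hC.sqrt = C := hC.sqrt_mul_self
  have hfact : M + C = M * (1 + M⁻¹ * C) := by
    rw [Matrix.mul_add, Matrix.mul_one, Matrix.mul_nonsing_inv_cancel_left _ _ hMd]
  have h3 : ((1 : Matrix ι ι ℂ) + M⁻¹ * C).det = (1 + hC.sqrt * (M⁻¹ * hC.sqrt)).det := by
    conv_lhs => rw [← hS]
    rw [← Matrix.mul_assoc, Matrix.det_one_add_mul_comm]
  rw [hfact, det_mul, h3]

/-- `√C * (M⁻¹ * √C)` is positive semidefinite when `M` is positive definite. -/
lemma aux_psd_conj {M C : Matrix ι ι ℂ} (hM : M.PosDef) (hC : C.PosSemidef) :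
    (hC.sqrt * (M⁻¹ * hC.sqrt)).PosSemidef := by
  have h := (hM.inv.posSemidef).conjTranspose_mul_mul_same hC.sqrt
  rwa [hC.posSemidef_sqrt.1, Matrix.mul_assoc] at h

/-- Determinant monotonicity: `det M ≤ det (M + P)`. -/
lemma aux_det_le_det_add {M P : Matrix ι ι ℂ} (hM : M.PosDef) (hP : P.PosSemidef) :
    M.det ≤ (M + P).det := by
  rw [aux_det_factor hM hP]
  have h1 : (1 : ℂ) ≤ (1 + hP.sqrt * (M⁻¹ * hP.sqrt)).det :=
    aux_one_le_det_one_add (aux_psd_conj hM hP)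
  exact le_mul_of_one_le_right hM.det_pos.le h1

/-- If `Q` is positive definite and `Q - 1` is PSD, then `1 - Q⁻¹` is PSD. -/
lemma aux_one_sub_inv_psd {Q : Matrix ι ι ℂ} (hQ : Q.PosDef) (h1 : (Q - 1).PosSemidef) :
    ((1 : Matrix ι ι ℂ) - Q⁻¹).PosSemidef := by
  have hQd : IsUnit Q.det := hQ.det_pos.ne'.isUnit
  have hQQ : Q * Q⁻¹ = 1 := Matrix.mul_nonsing_inv _ hQd
  have hQQ' : Q⁻¹ * Q = 1 := Matrix.nonsing_inv_mul _ hQd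
  set T := hQ.inv.posSemidef.sqrt with hTdef
  have hT : T * T = Q⁻¹ := hQ.inv.posSemidef.sqrt_mul_self
  have hTH : Tᴴ = T := hQ.inv.posSemidef.posSemidef_sqrt.1
  have hcomm1 : T * Q⁻¹ = Q⁻¹ * T := by rw [← hT]; exact (mul_assoc T T T).symm
  have hcomm : T * Q = Q * T := by
    calc T * Q = 1 * (T * Q) := (one_mul _).symm
      _ = Q * Q⁻¹ * (T * Q) := by rw [hQQ]
      _ = Q * (Q⁻¹ * T) * Q := by simp only [Matrix.mul_assoc]
      _ = Q * (T * Q⁻¹) * Q := by rw [← hcomm1]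
      _ = Q * T * (Q⁻¹ * Q) := by simp only [Matrix.mul_assoc]
      _ = Q * T := by rw [hQQ', Matrix.mul_one]
  have hTQT : T * Q * T = 1 := by rw [hcomm, Matrix.mul_assoc, hT, hQQ]
  have key : T * (Q - 1) * T = 1 - Q⁻¹ := by
    rw [Matrix.mul_sub, Matrix.mul_one, Matrix.sub_mul, hTQT, hT]
  have h := h1.conjTranspose_mul_mul_same T
  rwa [hTH, key] at h

/-- Inverse is antitone: `M⁻¹ - (M + B)⁻¹` is PSD. -/
lemma aux_inv_antitone {M B : Matrix ι ι ℂ} (hM : M.PosDef) (hB : B.PosSemidef) :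
    (M⁻¹ - (M + B)⁻¹).PosSemidef := by
  set R := hM.posSemidef.sqrt with hRdef
  have hR : R * R = M := hM.posSemidef.sqrt_mul_self
  have hRH : Rᴴ = R := hM.posSemidef.posSemidef_sqrt.1
  have hRd : IsUnit R.det := by
    have h : R.det * R.det = M.det := by rw [← det_mul, hR]
    have : R.det ≠ 0 := by
      intro h0
      rw [h0, mul_zero] at h
      exact hM.det_pos.ne' h.symm
    exact this.isUnit
  have hRinvH : (R⁻¹)ᴴ = R⁻¹ := by rw [Matrix.conjTranspose_nonsing_inv, hRH]
  have hRR : R * R⁻¹ = 1 := Matrix.mul_nonsing_inv _ hRd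
  have hRR' : R⁻¹ * R = 1 := Matrix.nonsing_inv_mul _ hRd
  have hN : (M + B).PosDef := hM.add_posSemidef hB
  have hNd : IsUnit (M + B).det := hN.det_pos.ne'.isUnit
  set N := M + B with hNdef
  -- the congruence Q = R⁻¹ N R⁻¹
  set Q := R⁻¹ * N * R⁻¹ with hQdef
  have hQ1 : Q - 1 = R⁻¹ * B * R⁻¹ := by
    have hRMR : R⁻¹ * M * R⁻¹ = 1 := by
      rw [← hR]
      calc R⁻¹ * (R * R) * R⁻¹ = R⁻¹ * (R * (R * R⁻¹)) := by simp only [Matrix.mul_assoc]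
        _ = 1 := by rw [hRR, Matrix.mul_one, hRR']
    rw [hQdef, hNdef, Matrix.mul_add, Matrix.add_mul, hRMR]
    abel
  have hQ1psd : (Q - 1).PosSemidef := by
    rw [hQ1]
    have := hB.conjTranspose_mul_mul_same R⁻¹
    rwa [hRinvH] at this
  have hQpd : Q.PosDef := by
    have : Q = 1 + (Q - 1) := by abel
    rw [this]
    exact Matrix.PosDef.one.add_posSemidef hQ1psd
  have hQinv : Q⁻¹ = R * N⁻¹ * R := by
    apply Matrix.inv_eq_right_inv
    rw [hQdef]
    calc R⁻¹ * N * R⁻¹ * (R * N⁻¹ * R)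
        = R⁻¹ * (N * ((R⁻¹ * R) * (N⁻¹ * R))) := by simp only [Matrix.mul_assoc]
      _ = 1 := by
          rw [hRR', Matrix.one_mul, ← Matrix.mul_assoc N N⁻¹ R,
            Matrix.mul_nonsing_inv _ hNd, Matrix.one_mul, hRR']
  have hkey : M⁻¹ - N⁻¹ = R⁻¹ * (1 - Q⁻¹) * R⁻¹ := by
    rw [Matrix.mul_sub, Matrix.sub_mul, Matrix.mul_one, hQinv]
    congr 1
    · rw [← hR, Matrix.mul_inv_rev]
    · symm
      calc R⁻¹ * (R * N⁻¹ * R) * R⁻¹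
          = R⁻¹ * (R * (N⁻¹ * (R * R⁻¹))) := by simp only [Matrix.mul_assoc]
        _ = R⁻¹ * (R * N⁻¹) := by rw [hRR, Matrix.mul_one]
        _ = (R⁻¹ * R) * N⁻¹ := by rw [Matrix.mul_assoc]
        _ = N⁻¹ := by rw [hRR', Matrix.one_mul]
  rw [hkey]
  have := (aux_one_sub_inv_psd hQpd hQ1psd).conjTranspose_mul_mul_same R⁻¹
  rwa [hRinvH] at this

/-- Key determinant inequality: `det(M+B+C) · det M ≤ det(M+B) · det(M+C)`. -/
lemma aux_ratio {M B C : Matrix ι ι ℂ} (hM : M.PosDef) (hB : B.PosSemidef)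
    (hC : C.PosSemidef) :
    (M + B + C).det * M.det ≤ (M + B).det * (M + C).det := by
  have hMB : (M + B).PosDef := hM.add_posSemidef hB
  have hX := aux_det_factor hM hC
  have hY := aux_det_factor hMB hC
  have hYpd : ((1 : Matrix ι ι ℂ) + hC.sqrt * ((M + B)⁻¹ * hC.sqrt)).PosDef :=
    Matrix.PosDef.one.add_posSemidef (aux_psd_conj hMB hC)
  have hdiff : (hC.sqrt * (M⁻¹ * hC.sqrt) - hC.sqrt * ((M + B)⁻¹ * hC.sqrt)).PosSemidef := by
    have h := (aux_inv_antitone hM hB).conjTranspose_mul_mul_same hC.sqrt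
    rw [hC.posSemidef_sqrt.1] at h
    have heq : hC.sqrt * (M⁻¹ - (M + B)⁻¹) * hC.sqrt
        = hC.sqrt * (M⁻¹ * hC.sqrt) - hC.sqrt * ((M + B)⁻¹ * hC.sqrt) := by
      rw [Matrix.mul_sub, Matrix.sub_mul]
      simp only [Matrix.mul_assoc]
    rwa [heq] at h
  have hle : ((1 : Matrix ι ι ℂ) + hC.sqrt * ((M + B)⁻¹ * hC.sqrt)).det
      ≤ ((1 : Matrix ι ι ℂ) + hC.sqrt * (M⁻¹ * hC.sqrt)).det := by
    have h2 : ((1 : Matrix ι ι ℂ) + hC.sqrt * (M⁻¹ * hC.sqrt))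
        = ((1 : Matrix ι ι ℂ) + hC.sqrt * ((M + B)⁻¹ * hC.sqrt))
          + (hC.sqrt * (M⁻¹ * hC.sqrt) - hC.sqrt * ((M + B)⁻¹ * hC.sqrt)) := by abel
    rw [h2]
    exact aux_det_le_det_add hYpd hdiff
  calc (M + B + C).det * M.det
      = (M + B).det * ((1 : Matrix ι ι ℂ) + hC.sqrt * ((M + B)⁻¹ * hC.sqrt)).det * M.det := by
        rw [hY]
    _ ≤ (M + B).det * ((1 : Matrix ι ι ℂ) + hC.sqrt * (M⁻¹ * hC.sqrt)).det * M.det :=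
        mul_le_mul_of_nonneg_right (mul_le_mul_of_nonneg_left hle hMB.det_pos.le)
          hM.det_pos.le
    _ = (M + B).det * (M.det * ((1 : Matrix ι ι ℂ) + hC.sqrt * (M⁻¹ * hC.sqrt)).det) := by
        ring
    _ = (M + B).det * (M + C).det := by rw [← hX]

end AuxLemmas

open Matrix in
/-- for positive semidefinite Hermitian matrices `D₁, …, D_a`, the set
function `g(S) = log det(I + D(S))` is a rank function: normalized, increasing and
submodular.  Consequently `B(g, E)` is a polymatroid. -/
theorem stmt0 (a n : ℕ) (D : Fin a → Matrix (Fin n) (Fin n) ℂ)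
    (hD : ∀ i, (D i).PosSemidef) :
    gFun a n D ∅ = 0 ∧
    (∀ S T : Finset (Fin a), S ⊆ T → gFun a n D S ≤ gFun a n D T) ∧
    (∀ S T : Finset (Fin a),
      gFun a n D (S ∩ T) + gFun a n D (S ∪ T) ≤ gFun a n D S + gFun a n D T) := by
  have hPSD : ∀ S : Finset (Fin a), (∑ i ∈ S, D i).PosSemidef := fun S =>
    Finset.sum_induction D _ (fun x y hx hy => hx.add hy) Matrix.PosSemidef.zero
      (fun i _ => hD i)
  have hPD : ∀ S : Finset (Fin a), ((1 : Matrix (Fin n) (Fin n) ℂ) + ∑ i ∈ S, D i).PosDef :=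
    fun S => Matrix.PosDef.one.add_posSemidef (hPSD S)
  have hre : ∀ S : Finset (Fin a), 0 < ((1 + ∑ i ∈ S, D i).det).re := fun S =>
    (Complex.lt_def.mp (hPD S).det_pos).1
  have him : ∀ S : Finset (Fin a), ((1 + ∑ i ∈ S, D i).det).im = 0 := fun S => by
    simpa using ((Complex.lt_def.mp (hPD S).det_pos).2).symm
  refine ⟨?_, ?_, ?_⟩
  · simp [gFun]
  · intro S T hST
    have hsplit : (1 : Matrix (Fin n) (Fin n) ℂ) + ∑ i ∈ T, D i
        = ((1 : Matrix (Fin n) (Fin n) ℂ) + ∑ i ∈ S, D i) + ∑ i ∈ T \ S, D i := by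
      rw [← Finset.sum_sdiff hST]
      abel
    have hdet : ((1 : Matrix (Fin n) (Fin n) ℂ) + ∑ i ∈ S, D i).det
        ≤ ((1 : Matrix (Fin n) (Fin n) ℂ) + ∑ i ∈ T, D i).det := by
      rw [hsplit]
      exact aux_det_le_det_add (hPD S) (hPSD (T \ S))
    exact Real.log_le_log (hre S) (Complex.le_def.mp hdet).1
  · intro S T
    have h1 : (1 : Matrix (Fin n) (Fin n) ℂ) + ∑ i ∈ S, D i
        = ((1 : Matrix (Fin n) (Fin n) ℂ) + ∑ i ∈ S ∩ T, D i) + ∑ i ∈ S \ T, D i := by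
      rw [← Finset.sum_inter_add_sum_sdiff S T D]
      abel
    have h2 : (1 : Matrix (Fin n) (Fin n) ℂ) + ∑ i ∈ T, D i
        = ((1 : Matrix (Fin n) (Fin n) ℂ) + ∑ i ∈ S ∩ T, D i) + ∑ i ∈ T \ S, D i := by
      rw [← Finset.sum_inter_add_sum_sdiff T S D, Finset.inter_comm T S]
      abel
    have hU : ∑ i ∈ (S ∪ T) \ S, D i + ∑ i ∈ S, D i = ∑ i ∈ S ∪ T, D i :=
      Finset.sum_sdiff Finset.subset_union_left
    have h3 : (1 : Matrix (Fin n) (Fin n) ℂ) + ∑ i ∈ S ∪ T, D i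
        = ((1 : Matrix (Fin n) (Fin n) ℂ) + ∑ i ∈ S ∩ T, D i) + ∑ i ∈ S \ T, D i
          + ∑ i ∈ T \ S, D i := by
      rw [← hU, Finset.union_sdiff_left, ← Finset.sum_inter_add_sum_sdiff S T D]
      abel
    have key := aux_ratio (hPD (S ∩ T)) (hPSD (S \ T)) (hPSD (T \ S))
    rw [← h3, ← h1, ← h2] at key
    have hprod : ((1 + ∑ i ∈ S ∪ T, D i).det.re) * ((1 + ∑ i ∈ S ∩ T, D i).det.re)
        ≤ ((1 + ∑ i ∈ S, D i).det.re) * ((1 + ∑ i ∈ T, D i).det.re) := by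
      have h := (Complex.le_def.mp key).1
      rw [Complex.mul_re, Complex.mul_re, him (S ∪ T), him S] at h
      simpa using h
    show Real.log _ + Real.log _ ≤ Real.log _ + Real.log _
    rw [← Real.log_mul (hre (S ∩ T)).ne' (hre (S ∪ T)).ne',
      ← Real.log_mul (hre S).ne' (hre T).ne']
    apply Real.log_le_log (mul_pos (hre (S ∩ T)) (hre (S ∪ T)))
    calc (1 + ∑ i ∈ S ∩ T, D i).det.re * (1 + ∑ i ∈ S ∪ T, D i).det.re
        = (1 + ∑ i ∈ S ∪ T, D i).det.re * (1 + ∑ i ∈ S ∩ T, D i).det.re := by ring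
      _ ≤ _ := hprod
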